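/- arXiv:1604.07840 — 3 statements merged into one kernel-verified Lean document; each statement's English description precedes it below -/
import Mathlib

section
/- Let f : ℝ → ℝ be continuously differentiable with f'(r) ≤ 0 for all r, and let β : ℝ → ℝ be continuously differentiable with nondecreasing derivative β'. Then for all x, y ∈ ℝ one has β'(x)·(f(y) − f(x)) ≥ ∫_x^y f'(τ)·β'(τ) dτ, where the integral is the signed interval integral. -/
/-- Monotonicity inequality: if `f` is C¹ with `f' ≤ 0` and `β` is C¹ with nondecreasing
derivative, then `β'(x) * (f y - f x) ≥ ∫_x^y f'(τ) * β'(τ) dτ`. -/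
theorem upwind_entropy_monotonicity
    (f β : ℝ → ℝ)
    (hf : ContDiff ℝ 1 f) (hf' : ∀ r : ℝ, deriv f r ≤ 0)
    (hβ : ContDiff ℝ 1 β) (hβ' : Monotone (deriv β)) :
    ∀ x y : ℝ,
      deriv β x * (f y - f x) ≥ ∫ τ in x..y, deriv f τ * deriv β τ := by
  intro x y
  have hgc : Continuous (deriv f) := hf.continuous_deriv le_rfl
  have hbc : Continuous (deriv β) := hβ.continuous_deriv le_rfl
  have hftc : f y - f x = ∫ τ in x..y, deriv f τ := by
    rw [intervalIntegral.integral_deriv_eq_sub (fun t _ => hf.differentiable one_ne_zero t)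
      (hgc.intervalIntegrable x y)]
  rw [hftc, ← intervalIntegral.integral_const_mul]
  rcases le_total x y with hxy | hxy
  · exact intervalIntegral.integral_mono_on hxy
      ((hgc.mul hbc).intervalIntegrable x y)
      ((continuous_const.mul hgc).intervalIntegrable x y)
      (fun t ht => by
        have h1 : deriv β x ≤ deriv β t := hβ' ht.1
        have := mul_le_mul_of_nonpos_left h1 (hf' t)
        linarith [this])
  · rw [intervalIntegral.integral_symm y x, intervalIntegral.integral_symm y x]
    have : (∫ τ in y..x, deriv β x * deriv f τ) ≤ ∫ τ in y..x, deriv f τ * deriv β τ := by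
      apply intervalIntegral.integral_mono_on hxy
        ((continuous_const.mul hgc).intervalIntegrable y x)
        ((hgc.mul hbc).intervalIntegrable y x)
      intro t ht
      have h1 : deriv β t ≤ deriv β x := hβ' ht.2
      have := mul_le_mul_of_nonpos_left h1 (hf' t)
      show deriv β x * deriv f t ≤ deriv f t * deriv β t
      linarith [this]
    linarith [this]
end

section
/- Let f : ℝ → ℝ be continuously differentiable with f'(r) ≤ 0 for all r, and let β : ℝ → ℝ be twice continuously differentiable with β''(r) ≥ 0 for all r. Then for all a, b, k ∈ ℝ: (i) ∫_a^b β''(r−k)·(f(b) − f(r)) dr = −β'(a−k)·(f(b) − f(a)) + ∫_a^b β'(r−k)·f'(r) dr, and (ii) ∫_a^b β''(r−k)·(f(b) − f(r)) dr ≤ 0; consequently β'(a−k)·(f(b) − f(a)) ≥ ∫_a^b β'(r−k)·f'(r) dr. All integrals are signed interval integrals. -/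
/-- Entropy consistency of the upwind scheme for a nonincreasing flux `f` and a convex
entropy `β(· - k)`: an integration-by-parts identity, the sign of the resulting integral,
and the consequent inequality. -/
theorem discrete_entropy_flux_inequality
    (f β : ℝ → ℝ)
    (hf : ContDiff ℝ 1 f) (hf' : ∀ r : ℝ, deriv f r ≤ 0)
    (hβ : ContDiff ℝ 2 β) (hβ'' : ∀ r : ℝ, 0 ≤ deriv (deriv β) r) :
    ∀ a b k : ℝ,
      ((∫ r in a..b, deriv (deriv β) (r - k) * (f b - f r))
          = -(deriv β (a - k) * (f b - f a)) + ∫ r in a..b, deriv β (r - k) * deriv f r)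
      ∧ (∫ r in a..b, deriv (deriv β) (r - k) * (f b - f r)) ≤ 0
      ∧ deriv β (a - k) * (f b - f a) ≥ ∫ r in a..b, deriv β (r - k) * deriv f r := by
  have hβ1 : ContDiff ℝ 1 (deriv β) :=
    (contDiff_succ_iff_deriv.mp (show ContDiff ℝ ((1 : ℕ∞) + 1) β from hβ)).2.2
  have hcβ'' : Continuous (deriv (deriv β)) := hβ1.continuous_deriv le_rfl
  have hcβ' : Continuous (deriv β) := hβ1.continuous
  have hcf' : Continuous (deriv f) := hf.continuous_deriv le_rfl
  have hfd : Differentiable ℝ f := hf.differentiable one_ne_zero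
  have hanti : Antitone f := fun x y hxy => by
    exact antitone_of_deriv_nonpos hfd hf' hxy
  intro a b k
  -- integration by parts
  have hu : ∀ x ∈ Set.uIcc a b,
      HasDerivAt (fun r => deriv β (r - k)) (deriv (deriv β) (x - k)) x := by
    intro x _
    have h1 : HasDerivAt (deriv β) (deriv (deriv β) (x - k)) (x - k) :=
      ((hβ1.differentiable one_ne_zero) (x - k)).hasDerivAt
    have h2 : HasDerivAt (fun r : ℝ => r - k) 1 x := (hasDerivAt_id x).sub_const k
    exact (h1.comp x h2).congr_deriv (mul_one _)
  have hv : ∀ x ∈ Set.uIcc a b,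
      HasDerivAt (fun r => f b - f r) (-(deriv f x)) x := by
    intro x _
    exact ((hasDerivAt_const x (f b)).sub (hfd x).hasDerivAt).congr_deriv (by simp)
  have hint1 : IntervalIntegrable (fun r => deriv (deriv β) (r - k) * (f b - f r))
      MeasureTheory.volume a b :=
    ((hcβ''.comp (continuous_id.sub continuous_const)).mul
      (continuous_const.sub hf.continuous)).intervalIntegrable a b
  have hint2 : IntervalIntegrable (fun r => deriv β (r - k) * -(deriv f r))
      MeasureTheory.volume a b :=
    ((hcβ'.comp (continuous_id.sub continuous_const)).mul hcf'.neg).intervalIntegrable a b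
  have hiu : IntervalIntegrable (fun x => deriv (deriv β) (x - k))
      MeasureTheory.volume a b :=
    (hcβ''.comp (continuous_id.sub continuous_const)).intervalIntegrable a b
  have hiv : IntervalIntegrable (fun x => -(deriv f x)) MeasureTheory.volume a b :=
    hcf'.neg.intervalIntegrable a b
  have ibp := intervalIntegral.integral_deriv_mul_eq_sub hu hv hiu hiv
  have key : (∫ r in a..b, deriv (deriv β) (r - k) * (f b - f r))
      = -(deriv β (a - k) * (f b - f a)) + ∫ r in a..b, deriv β (r - k) * deriv f r := by
    have hsplit : (∫ r in a..b, (deriv (deriv β) (r - k) * (f b - f r)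
        + deriv β (r - k) * -(deriv f r)))
        = (∫ r in a..b, deriv (deriv β) (r - k) * (f b - f r))
          + ∫ r in a..b, deriv β (r - k) * -(deriv f r) :=
      intervalIntegral.integral_add hint1 hint2
    have hneg : (∫ r in a..b, deriv β (r - k) * -(deriv f r))
        = -∫ r in a..b, deriv β (r - k) * deriv f r := by
      rw [← intervalIntegral.integral_neg]
      congr 1; ext r; ring
    rw [hsplit, hneg] at ibp
    simp only [sub_self, mul_zero, zero_mul] at ibp
    linarith [ibp]
  refine ⟨key, ?_, ?_⟩
  · -- sign
    rcases le_total a b with hab | hab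
    · have hpos : 0 ≤ ∫ r in a..b, -(deriv (deriv β) (r - k) * (f b - f r)) := by
        apply intervalIntegral.integral_nonneg hab
        intro x hx
        have : f b ≤ f x := hanti hx.2
        nlinarith [hβ'' (x - k)]
      rw [intervalIntegral.integral_neg] at hpos
      linarith
    · rw [intervalIntegral.integral_symm b a]
      have : 0 ≤ ∫ r in b..a, deriv (deriv β) (r - k) * (f b - f r) := by
        apply intervalIntegral.integral_nonneg hab
        intro x hx
        have : f x ≤ f b := hanti hx.1
        exact mul_nonneg (hβ'' _) (by linarith)
      linarith
  · have h2 : (∫ r in a..b, deriv (deriv β) (r - k) * (f b - f r)) ≤ 0 := by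
      rcases le_total a b with hab | hab
      · have hpos : 0 ≤ ∫ r in a..b, -(deriv (deriv β) (r - k) * (f b - f r)) := by
          apply intervalIntegral.integral_nonneg hab
          intro x hx
          have : f b ≤ f x := hanti hx.2
          nlinarith [hβ'' (x - k)]
        rw [intervalIntegral.integral_neg] at hpos
        linarith
      · rw [intervalIntegral.integral_symm b a]
        have : 0 ≤ ∫ r in b..a, deriv (deriv β) (r - k) * (f b - f r) := by
          apply intervalIntegral.integral_nonneg hab
          intro x hx
          have : f x ≤ f b := hanti hx.1
          exact mul_nonneg (hβ'' _) (by linarith)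
        linarith
    linarith [key, h2]
end

section
/- Let f : ℝ → ℝ be continuously differentiable with |f'(r)| ≤ L for all r, let ξ > 0, and let φ : ℝ → ℝ be a function with |φ(s)| ≤ 1 for all s and φ(s) = sign(s) whenever |s| ≥ ξ. Then for all a, b ∈ ℝ: (i) | ∫_b^a φ(r−b)·f'(r) dr − sign(a−b)·(f(a) − f(b)) | ≤ 2·L·ξ, and (ii) | ∫_b^a φ(r−b)·f'(r) dr | ≤ L·|a−b|. -/
open MeasureTheory intervalIntegral Set

private lemma aux_intervalIntegrable (g : ℝ → ℝ) (hg : AEStronglyMeasurable g volume)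
    (C : ℝ) (hC : ∀ r, |g r| ≤ C) (x y : ℝ) : IntervalIntegrable g volume x y := by
  rw [intervalIntegrable_iff]
  refine Integrable.mono' (integrableOn_const ?_) hg.restrict
    (Filter.Eventually.of_forall fun r => by simpa [Real.norm_eq_abs] using hC r)
  exact measure_Ioc_lt_top.ne

/-- Comparison of the smoothed entropy flux `∫_b^a φ(r-b) f'(r) dr` (with `φ` a bounded
approximation of the sign function, equal to `sign` outside `[-ξ, ξ]`) with the Kružkov
entropy flux `sign(a-b)(f(a)-f(b))`, together with the Lipschitz bound. -/
theorem smoothed_entropy_flux_estimates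
    (f : ℝ → ℝ) (L : ℝ) (hf : ContDiff ℝ 1 f)
    (hL : ∀ r : ℝ, |deriv f r| ≤ L)
    (ξ : ℝ) (hξ : 0 < ξ)
    (φ : ℝ → ℝ) (hφmeas : Measurable φ)
    (hφbdd : ∀ s : ℝ, |φ s| ≤ 1)
    (hφsign : ∀ s : ℝ, ξ ≤ |s| → φ s = Real.sign s) :
    ∀ a b : ℝ,
      |(∫ r in b..a, φ (r - b) * deriv f r) - Real.sign (a - b) * (f a - f b)|
          ≤ 2 * L * ξ
      ∧ |∫ r in b..a, φ (r - b) * deriv f r| ≤ L * |a - b| := by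
  intro a b
  have hLnn : 0 ≤ L := le_trans (abs_nonneg _) (hL 0)
  have hcont : Continuous (deriv f) := hf.continuous_deriv le_rfl
  have hφm : Measurable fun r : ℝ => φ (r - b) := hφmeas.comp (measurable_id.sub_const b)
  have hgm : AEStronglyMeasurable (fun r : ℝ => φ (r - b) * deriv f r) volume :=
    (hφm.mul hcont.measurable).aestronglyMeasurable
  have hbd : ∀ r : ℝ, |φ (r - b) * deriv f r| ≤ L := fun r => by
    rw [abs_mul]
    calc |φ (r - b)| * |deriv f r| ≤ 1 * L :=
          mul_le_mul (hφbdd _) (hL r) (abs_nonneg _) one_pos.le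
      _ = L := one_mul L
  have h1 : IntervalIntegrable (fun r => φ (r - b) * deriv f r) volume b a :=
    aux_intervalIntegrable _ hgm L hbd b a
  have hint_deriv : ∀ x y : ℝ, IntervalIntegrable (deriv f) volume x y := fun x y =>
    hcont.intervalIntegrable x y
  have hsub : (∫ r in b..a, deriv f r) = f a - f b :=
    intervalIntegral.integral_deriv_eq_sub
      (fun x _ => (hf.differentiable one_ne_zero).differentiableAt) (hint_deriv b a)
  have part2 : |∫ r in b..a, φ (r - b) * deriv f r| ≤ L * |a - b| := by
    have := intervalIntegral.norm_integral_le_of_norm_le_const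
      (C := L) (a := b) (b := a) (f := fun r => φ (r - b) * deriv f r)
      (fun x _ => by rw [Real.norm_eq_abs]; exact hbd x)
    simpa [Real.norm_eq_abs] using this
  refine ⟨?_, part2⟩
  rcases lt_trichotomy a b with hab | hab | hab
  · -- a < b
    have hsign : Real.sign (a - b) = -1 := Real.sign_of_neg (by linarith)
    set g : ℝ → ℝ := fun r => (φ (r - b) + 1) * deriv f r with hg
    have hgbd : ∀ r, |g r| ≤ 2 * L := fun r => by
      have h2 : |φ (r - b) + 1| ≤ 2 := by
        have := hφbdd (r - b); rw [abs_le] at this ⊢; constructor <;> linarith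
      rw [hg]; simp only [abs_mul]
      exact mul_le_mul h2 (hL r) (abs_nonneg _) (by norm_num)
    have hgmeas : AEStronglyMeasurable g volume :=
      ((hφm.add measurable_const).mul hcont.measurable).aestronglyMeasurable
    have hgint : ∀ x y : ℝ, IntervalIntegrable g volume x y := fun x y =>
      aux_intervalIntegrable g hgmeas (2 * L) hgbd x y
    have hrw : (∫ r in b..a, φ (r - b) * deriv f r) - Real.sign (a - b) * (f a - f b)
        = ∫ r in b..a, g r := by
      rw [hsign, ← hsub]
      rw [show (∫ r in b..a, φ (r - b) * deriv f r) - (-1) * ∫ r in b..a, deriv f r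
          = (∫ r in b..a, φ (r - b) * deriv f r) + ∫ r in b..a, deriv f r by ring]
      rw [← intervalIntegral.integral_add h1 (hint_deriv b a)]
      apply intervalIntegral.integral_congr
      intro r _
      simp only [hg]; ring
    set c : ℝ := max a (b - ξ) with hc
    have hac : a ≤ c := le_max_left _ _
    have hcb : c ≤ b := max_le hab.le (by linarith)
    have hcge : b - ξ ≤ c := le_max_right _ _
    have hzero : (∫ r in c..a, g r) = 0 := by
      rcases le_or_gt a (b - ξ) with h | h
      · have hceq : c = b - ξ := max_eq_right h
        rw [show (∫ r in c..a, g r) = ∫ r in c..a, (0 : ℝ) from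
          intervalIntegral.integral_congr fun r hr => ?_]
        · simp
        · have hr' : r ≤ b - ξ := by
            rw [Set.uIcc_of_ge (hceq ▸ h)] at hr
            exact hceq ▸ hr.2
          have hs : φ (r - b) = Real.sign (r - b) :=
            hφsign _ (by rw [abs_of_nonpos (by linarith)]; linarith)
          have : Real.sign (r - b) = -1 := Real.sign_of_neg (by linarith)
          simp only [hg, hs, this]; ring
      · have : c = a := max_eq_left (by linarith)
        rw [this, intervalIntegral.integral_same]
    have hsplit : (∫ r in b..a, g r) = ∫ r in b..c, g r := by
      rw [← intervalIntegral.integral_add_adjacent_intervals (hgint b c) (hgint c a), hzero,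
        add_zero]
    rw [hrw, hsplit]
    have := intervalIntegral.norm_integral_le_of_norm_le_const
      (C := 2 * L) (a := b) (b := c) (f := g)
      (fun x _ => by rw [Real.norm_eq_abs]; exact hgbd x)
    rw [Real.norm_eq_abs] at this
    calc |∫ r in b..c, g r| ≤ 2 * L * |c - b| := this
      _ ≤ 2 * L * ξ := by
          apply mul_le_mul_of_nonneg_left _ (by positivity)
          rw [abs_of_nonpos (by linarith)]; linarith
  · -- a = b
    subst hab
    simp [Real.sign_zero]
    positivity
  · -- b < a
    have hsign : Real.sign (a - b) = 1 := Real.sign_of_pos (by linarith)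
    set g : ℝ → ℝ := fun r => (φ (r - b) - 1) * deriv f r with hg
    have hgbd : ∀ r, |g r| ≤ 2 * L := fun r => by
      have h2 : |φ (r - b) - 1| ≤ 2 := by
        have := hφbdd (r - b); rw [abs_le] at this ⊢; constructor <;> linarith
      rw [hg]; simp only [abs_mul]
      exact mul_le_mul h2 (hL r) (abs_nonneg _) (by norm_num)
    have hgmeas : AEStronglyMeasurable g volume :=
      ((hφm.sub measurable_const).mul hcont.measurable).aestronglyMeasurable
    have hgint : ∀ x y : ℝ, IntervalIntegrable g volume x y := fun x y =>
      aux_intervalIntegrable g hgmeas (2 * L) hgbd x y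
    have hrw : (∫ r in b..a, φ (r - b) * deriv f r) - Real.sign (a - b) * (f a - f b)
        = ∫ r in b..a, g r := by
      rw [hsign, one_mul, ← hsub]
      rw [← intervalIntegral.integral_sub h1 (hint_deriv b a)]
      apply intervalIntegral.integral_congr
      intro r _
      simp only [hg]; ring
    set c : ℝ := min a (b + ξ) with hc
    have hca : c ≤ a := min_le_left _ _
    have hbc : b ≤ c := le_min hab.le (by linarith)
    have hcle : c ≤ b + ξ := min_le_right _ _
    have hzero : (∫ r in c..a, g r) = 0 := by
      rcases le_or_gt (b + ξ) a with h | h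
      · have hceq : c = b + ξ := min_eq_right h
        rw [show (∫ r in c..a, g r) = ∫ r in c..a, (0 : ℝ) from
          intervalIntegral.integral_congr fun r hr => ?_]
        · simp
        · have hr' : b + ξ ≤ r := by
            rw [Set.uIcc_of_le (hceq ▸ h)] at hr
            exact hceq ▸ hr.1
          have hs : φ (r - b) = Real.sign (r - b) :=
            hφsign _ (by rw [abs_of_nonneg (by linarith)]; linarith)
          have : Real.sign (r - b) = 1 := Real.sign_of_pos (by linarith)
          simp only [hg, hs, this]; ring
      · have : c = a := min_eq_left (by linarith)
        rw [this, intervalIntegral.integral_same]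
    have hsplit : (∫ r in b..a, g r) = ∫ r in b..c, g r := by
      rw [← intervalIntegral.integral_add_adjacent_intervals (hgint b c) (hgint c a), hzero,
        add_zero]
    rw [hrw, hsplit]
    have := intervalIntegral.norm_integral_le_of_norm_le_const
      (C := 2 * L) (a := b) (b := c) (f := g)
      (fun x _ => by rw [Real.norm_eq_abs]; exact hgbd x)
    rw [Real.norm_eq_abs] at this
    calc |∫ r in b..c, g r| ≤ 2 * L * |c - b| := this
      _ ≤ 2 * L * ξ := by
          apply mul_le_mul_of_nonneg_left _ (by positivity)
          rw [abs_of_nonneg (by linarith)]; linarith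
end
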